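/- Let n ≥ 2, p ≥ 0, c ∈ ℝ, and let (f,Γ) satisfy conditions (C) and (F) with λ* := (1,−1,…,−1) ∉ closure(Γ). If either eₙ := (0,…,0,1) ∈ ∂Γ or c ≤ 0, then there exists no v ∈ C²(closure(ℝⁿ₊)) depending only on the variable xₙ that satisfies f(λ(A[v])) = e^(−p·v) on closure(ℝⁿ₊) and ∂v/∂xₙ = c·e^v on ∂ℝⁿ₊. -/

import Mathlib

noncomputable section

open Filter Metric Polynomial MeasureTheory
open scoped Topology

namespace CLL

abbrev E (d : ℕ) := EuclideanSpace ℝ (Fin d)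

/-- One-sided partial derivative (within a set `s`) in the `i`-th coordinate direction. -/
def pd (d : ℕ) (s : Set (E d)) (v : E d → ℝ) (i : Fin d) (x : E d) : ℝ :=
  fderivWithin ℝ v s x (EuclideanSpace.single i 1)

/-- The Möbius Hessian `A[v] = e^{-2v} (-∇² v + ∇v ⊗ ∇v - |∇v|²/2 · I)`,
computed with derivatives within `s`. -/
def mHess (d : ℕ) (s : Set (E d)) (v : E d → ℝ) (x : E d) : Matrix (Fin d) (Fin d) ℝ :=
  fun i j =>
    Real.exp (-2 * v x) *
      (-(pd d s (fun y => pd d s v j y) i x)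
        + pd d s v i x * pd d s v j x
        - (1 / 2) * (∑ k, (pd d s v k x) ^ 2) * (if i = j then (1 : ℝ) else 0))

/-- `μ` lists the eigenvalues (with multiplicity, in some order) of the matrix `M`. -/
def IsEigList (d : ℕ) (M : Matrix (Fin d) (Fin d) ℝ) (μ : Fin d → ℝ) : Prop :=
  M.charpoly = ∏ i, (X - C (μ i))

/-- `λ* = (1, -1, …, -1)`. -/
def lamStar (d : ℕ) : Fin d → ℝ := fun i => if (i : ℕ) = 0 then 1 else -1

/-- Condition (C): `Γ ⊊ ℝⁿ` is a nonempty open symmetric cone with vertex at the origin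
satisfying `Γ + Γₙ ⊆ Γ`. -/
def CondC (d : ℕ) (Γ : Set (Fin d → ℝ)) : Prop :=
  Γ.Nonempty ∧ Γ ≠ Set.univ ∧ IsOpen Γ ∧
    (∀ t : ℝ, 0 < t → ∀ lam ∈ Γ, t • lam ∈ Γ) ∧
    (∀ σ : Equiv.Perm (Fin d), ∀ lam ∈ Γ, lam ∘ σ ∈ Γ) ∧
    (∀ lam ∈ Γ, ∀ μ : Fin d → ℝ, (∀ i, 0 < μ i) → lam + μ ∈ Γ)

/-- Condition (F): `f` is symmetric on `Γ`, locally Lipschitz, and for each compact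
`K ⊆ Γ` its partial derivatives are bounded below a.e. on `K` by a positive constant. -/
def CondF (d : ℕ) (Γ : Set (Fin d → ℝ)) (f : (Fin d → ℝ) → ℝ) : Prop :=
  (∀ σ : Equiv.Perm (Fin d), ∀ lam ∈ Γ, f (lam ∘ σ) = f lam) ∧
  (∀ lam ∈ Γ, ∃ K : NNReal, ∃ t ∈ nhdsWithin lam Γ, LipschitzOnWith K f t) ∧
  (∀ K : Set (Fin d → ℝ), K ⊆ Γ → IsCompact K →
    ∃ c > (0 : ℝ), ∀ᵐ lam ∂(volume.restrict K),
      ∀ i : Fin d, c ≤ lineDeriv ℝ f lam (Pi.single i 1))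

/-- The index of the last coordinate. -/
def lastIdx (n : ℕ) : Fin (n + 2) := Fin.last (n + 1)

/-- The open upper half space `ℝⁿ₊`. -/
def upperH (n : ℕ) : Set (E (n + 2)) := {x | 0 < x (lastIdx n)}

/-- The standard bubble `log (a / (1 + b |x - x̄|²))`. -/
def bubble (n : ℕ) (a b : ℝ) (xbar : E (n + 2)) (x : E (n + 2)) : ℝ :=
  Real.log (a / (1 + b * ‖x - xbar‖ ^ 2))

/-- The open upper half ball `B_r⁺`. -/
def Bplus (n : ℕ) (r : ℝ) : Set (E (n + 2)) := Metric.ball 0 r ∩ upperH n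

/-- The set defining `μ_Γ⁻`. -/
def muSet (d : ℕ) (Γ : Set (Fin d → ℝ)) : Set ℝ :=
  {c : ℝ | (fun i : Fin d => if (i : ℕ) = 0 then c else -1) ∈ closure Γ}

/-- `μ_Γ⁻ = inf { c : (c,-1,…,-1) ∈ closure Γ }`. -/
def muMinus (d : ℕ) (Γ : Set (Fin d → ℝ)) : ℝ :=
  sInf (muSet d Γ)

end CLL

open CLL

namespace Aux16
variable {n : ℕ}

/-- The closed halfspace. -/
def SS (n : ℕ) : Set (E (n + 2)) := {x | 0 ≤ x (lastIdx n)}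

lemma continuous_coord : Continuous fun x : E (n + 2) => x (lastIdx n) :=
  (EuclideanSpace.proj (lastIdx n) : E (n+2) →L[ℝ] ℝ).continuous

lemma closure_upperH_eq : closure (upperH n) = SS n := by
  apply Set.Subset.antisymm
  · exact closure_minimal (fun x hx => show (0:ℝ) ≤ x (lastIdx n) from le_of_lt hx)
      (isClosed_le continuous_const continuous_coord)
  · intro x hx
    have htend : Tendsto (fun k : ℕ => x + ((1:ℝ)/(k+1)) • EuclideanSpace.single (lastIdx n) (1:ℝ))
        atTop (𝓝 x) := by
      have h0 : Tendsto (fun k : ℕ => (1:ℝ)/(k+1)) atTop (𝓝 0) :=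
        tendsto_one_div_add_atTop_nhds_zero_nat
      have := (h0.smul_const (EuclideanSpace.single (lastIdx n) (1:ℝ))).const_add x
      simpa using this
    refine mem_closure_of_tendsto htend (Eventually.of_forall fun k => ?_)
    show 0 < (x + ((1:ℝ)/(k+1)) • EuclideanSpace.single (lastIdx n) (1:ℝ)) (lastIdx n)
    have : (x + ((1:ℝ)/(k+1)) • EuclideanSpace.single (lastIdx n) (1:ℝ)) (lastIdx n)
        = x (lastIdx n) + (1:ℝ)/(k+1) := by
      simp [EuclideanSpace.single_apply]
    rw [this]
    have : (0:ℝ) < 1/(k+1) := by positivity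
    have hx' : (0:ℝ) ≤ x (lastIdx n) := hx
    linarith

lemma convex_SS : Convex ℝ (SS n) := by
  have : SS n = (fun x : E (n+2) => x (lastIdx n)) ⁻¹' Set.Ici 0 := rfl
  rw [this]
  exact (convex_Ici (0:ℝ)).linear_preimage
    ((EuclideanSpace.proj (lastIdx n) : E (n+2) →L[ℝ] ℝ) : E (n+2) →ₗ[ℝ] ℝ)

lemma uniqueDiffOn_SS : UniqueDiffOn ℝ (SS n) := by
  apply uniqueDiffOn_convex convex_SS
  refine ⟨EuclideanSpace.single (lastIdx n) (1:ℝ), ?_⟩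
  have hop : IsOpen (upperH n) := by
    have : upperH n = (fun x : E (n+2) => x (lastIdx n)) ⁻¹' Set.Ioi 0 := rfl
    rw [this]; exact isOpen_Ioi.preimage continuous_coord
  have hsub : upperH n ⊆ SS n := fun x hx => show (0:ℝ) ≤ x (lastIdx n) from le_of_lt hx
  have : upperH n ⊆ interior (SS n) := hop.subset_interior_iff.mpr hsub
  apply this
  show (0:ℝ) < EuclideanSpace.single (lastIdx n) (1:ℝ) (lastIdx n)
  simp [EuclideanSpace.single_apply]


/-- `L x = xₙ • eₙ`, projection onto the last axis. -/
def LL (n : ℕ) : E (n+2) →L[ℝ] E (n+2) :=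
  (EuclideanSpace.proj (lastIdx n) : E (n+2) →L[ℝ] ℝ).smulRight
    (EuclideanSpace.single (lastIdx n) (1:ℝ))

lemma LL_apply (x : E (n+2)) :
    LL n x = x (lastIdx n) • EuclideanSpace.single (lastIdx n) (1:ℝ) := by
  simp [LL]

lemma single_eq_smul (t : ℝ) :
    EuclideanSpace.single (lastIdx n) t = t • EuclideanSpace.single (lastIdx n) (1:ℝ) := by
  ext j
  simp [EuclideanSpace.single_apply]

lemma LL_single_eq (x : E (n+2)) :
    LL n x = EuclideanSpace.single (lastIdx n) (x (lastIdx n)) := by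
  rw [LL_apply, ← single_eq_smul]

lemma LL_coord (x : E (n+2)) : (LL n x) (lastIdx n) = x (lastIdx n) := by
  rw [LL_single_eq]; simp [EuclideanSpace.single_apply]

lemma LL_mapsTo : Set.MapsTo (LL n) (SS n) (SS n) := by
  intro x hx
  show (0:ℝ) ≤ (LL n x) (lastIdx n)
  rw [LL_coord]; exact hx

lemma LL_single (i : Fin (n+2)) :
    LL n (EuclideanSpace.single i (1:ℝ)) =
      if i = lastIdx n then EuclideanSpace.single (lastIdx n) (1:ℝ) else 0 := by
  rw [LL_apply]
  by_cases h : i = lastIdx n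
  · simp [h, EuclideanSpace.single_apply]
  · have : EuclideanSpace.single i (1:ℝ) (lastIdx n) = 0 := by
      simp [EuclideanSpace.single_apply]
      intro hc; exact h hc.symm
    rw [this]; simp [h]

/-- factorization of the within-derivative for functions depending only on xₙ. -/
lemma fderiv_factor {w : E (n+2) → ℝ} (hw : DifferentiableOn ℝ w (SS n))
    (hfac : ∀ x ∈ SS n, w x = w (LL n x)) {x : E (n+2)} (hx : x ∈ SS n) :
    fderivWithin ℝ w (SS n) x = (fderivWithin ℝ w (SS n) (LL n x)).comp (LL n) := by
  have h1 : fderivWithin ℝ w (SS n) x = fderivWithin ℝ (w ∘ LL n) (SS n) x :=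
    (fderivWithin_congr (fun y hy => (hfac y hy).symm) (hfac x hx).symm).symm
  have h2 : HasFDerivWithinAt (w ∘ LL n)
      ((fderivWithin ℝ w (SS n) (LL n x)).comp (LL n : E (n+2) →L[ℝ] E (n+2))) (SS n) x :=
    ((hw (LL n x) (LL_mapsTo hx)).hasFDerivWithinAt).comp x
      ((LL n).hasFDerivWithinAt) LL_mapsTo
  rw [h1, h2.fderivWithin (uniqueDiffOn_SS x hx)]

lemma pd_eq_zero_of_factor {w : E (n+2) → ℝ} (hw : DifferentiableOn ℝ w (SS n))
    (hfac : ∀ x ∈ SS n, w x = w (LL n x)) {x : E (n+2)} (hx : x ∈ SS n)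
    {i : Fin (n+2)} (hi : i ≠ lastIdx n) :
    pd (n+2) (SS n) w i x = 0 := by
  show fderivWithin ℝ w (SS n) x (EuclideanSpace.single i 1) = 0
  rw [fderiv_factor hw hfac hx]
  simp [ContinuousLinearMap.comp_apply, LL_single, hi]

lemma pd_last_factor {w : E (n+2) → ℝ} (hw : DifferentiableOn ℝ w (SS n))
    (hfac : ∀ x ∈ SS n, w x = w (LL n x)) {x : E (n+2)} (hx : x ∈ SS n) :
    pd (n+2) (SS n) w (lastIdx n) x = pd (n+2) (SS n) w (lastIdx n) (LL n x) := by
  show fderivWithin ℝ w (SS n) x (EuclideanSpace.single (lastIdx n) 1) = _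
  rw [fderiv_factor hw hfac hx]
  simp only [ContinuousLinearMap.comp_apply, LL_single, if_pos rfl]
  rfl


section Vfacts
variable {v : E (n+2) → ℝ} (hv : ContDiffOn ℝ 2 v (SS n))
  (hdep : ∀ x ∈ SS n, v x = v (LL n x))

include hv

lemma v_diffOn : DifferentiableOn ℝ v (SS n) := hv.differentiableOn two_ne_zero

/-- the gradient component function `h = ∂ₙ v` is C¹ on S. -/
lemma hh_contDiffOn :
    ContDiffOn ℝ 1 (fun x => pd (n+2) (SS n) v (lastIdx n) x) (SS n) := by
  have h1 : ContDiffOn ℝ 1 (fderivWithin ℝ v (SS n)) (SS n) :=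
    hv.fderivWithin uniqueDiffOn_SS (by norm_num)
  exact h1.clm_apply contDiffOn_const

lemma hh_diffOn : DifferentiableOn ℝ (fun x => pd (n+2) (SS n) v (lastIdx n) x) (SS n) :=
  (hh_contDiffOn hv).differentiableOn one_ne_zero

include hdep

lemma pd_v_zero {x : E (n+2)} (hx : x ∈ SS n) {i : Fin (n+2)} (hi : i ≠ lastIdx n) :
    pd (n+2) (SS n) v i x = 0 :=
  pd_eq_zero_of_factor (v_diffOn hv) hdep hx hi

lemma hh_fac : ∀ x ∈ SS n,
    pd (n+2) (SS n) v (lastIdx n) x = pd (n+2) (SS n) v (lastIdx n) (LL n x) :=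
  fun x hx => pd_last_factor (v_diffOn hv) hdep hx

lemma pd_hh_zero {x : E (n+2)} (hx : x ∈ SS n) {i : Fin (n+2)} (hi : i ≠ lastIdx n) :
    pd (n+2) (SS n) (fun y => pd (n+2) (SS n) v (lastIdx n) y) i x = 0 :=
  pd_eq_zero_of_factor (hh_diffOn hv) (hh_fac hv hdep) hx hi

lemma pd_pd_v_zero {x : E (n+2)} (hx : x ∈ SS n) (i : Fin (n+2)) {j : Fin (n+2)}
    (hj : j ≠ lastIdx n) :
    pd (n+2) (SS n) (fun y => pd (n+2) (SS n) v j y) i x = 0 := by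
  show fderivWithin ℝ (fun y => pd (n+2) (SS n) v j y) (SS n) x _ = 0
  have heq : fderivWithin ℝ (fun y => pd (n+2) (SS n) v j y) (SS n) x
      = fderivWithin ℝ (fun _ => (0:ℝ)) (SS n) x :=
    fderivWithin_congr (fun y hy => pd_v_zero hv hdep hy hj) (pd_v_zero hv hdep hx hj)
  rw [heq, fderivWithin_const_apply]
  rfl

lemma sum_sq_pd {x : E (n+2)} (hx : x ∈ SS n) :
    (∑ k, (pd (n+2) (SS n) v k x) ^ 2) = (pd (n+2) (SS n) v (lastIdx n) x) ^ 2 := by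
  rw [Finset.sum_eq_single (lastIdx n)]
  · intro k _ hk
    rw [pd_v_zero hv hdep hx hk]; ring
  · intro hmem; exact absurd (Finset.mem_univ _) hmem

end Vfacts


section Diag
variable (n)
variable (v : E (n+2) → ℝ)

/-- `u = ∂ₙ v`. -/
def uu (x : E (n+2)) : ℝ := pd (n+2) (SS n) v (lastIdx n) x
/-- `P = ∂ₙₙ v`. -/
def PP (x : E (n+2)) : ℝ :=
  pd (n+2) (SS n) (fun y => pd (n+2) (SS n) v (lastIdx n) y) (lastIdx n) x

/-- the diagonal of the Möbius Hessian of a one-variable function -/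
def dvec (x : E (n+2)) : Fin (n+2) → ℝ := fun i =>
  if i = lastIdx n then Real.exp (-2 * v x) * (-(PP n v x) + (uu n v x)^2/2)
  else -(Real.exp (-2 * v x) * (uu n v x)^2/2)

variable {n v}
variable (hv : ContDiffOn ℝ 2 v (SS n)) (hdep : ∀ x ∈ SS n, v x = v (LL n x))
include hv hdep

lemma mHess_diag {x : E (n+2)} (hx : x ∈ SS n) :
    mHess (n+2) (SS n) v x = Matrix.diagonal (dvec n v x) := by
  funext i j
  rw [Matrix.diagonal_apply]
  show Real.exp (-2 * v x) *
      (-(pd (n+2) (SS n) (fun y => pd (n+2) (SS n) v j y) i x)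
        + pd (n+2) (SS n) v i x * pd (n+2) (SS n) v j x
        - (1 / 2) * (∑ k, (pd (n+2) (SS n) v k x) ^ 2) * (if i = j then (1 : ℝ) else 0)) = _
  rw [sum_sq_pd hv hdep hx]
  by_cases hij : i = j
  · subst hij
    rw [if_pos rfl, if_pos rfl]
    by_cases hi : i = lastIdx n
    · subst hi
      rw [dvec, if_pos rfl]
      show _ = Real.exp (-2 * v x) * (-(PP n v x) + (uu n v x)^2/2)
      rw [PP, uu]
      ring
    · rw [dvec, if_neg hi]
      rw [pd_pd_v_zero hv hdep hx i hi, pd_v_zero hv hdep hx hi]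
      show Real.exp (-2 * v x) * (-0 + 0 * 0 - 1/2 * (uu n v x)^2 * 1) = _
      ring
  · rw [if_neg hij, if_neg hij]
    by_cases hj : j = lastIdx n
    · subst hj
      have hi : i ≠ lastIdx n := hij
      rw [pd_hh_zero hv hdep hx hi, pd_v_zero hv hdep hx hi]
      ring
    · rw [pd_pd_v_zero hv hdep hx i hj, pd_v_zero hv hdep hx hj]
      ring

end Diag


section Eig
variable {m : ℕ}

lemma charpoly_diagonal (g : Fin m → ℝ) :
    (Matrix.diagonal g).charpoly = ∏ i, (X - C (g i)) := by
  have hcm : Matrix.charmatrix (Matrix.diagonal g)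
      = Matrix.diagonal (fun i => (X : ℝ[X]) - C (g i)) := by
    ext i j
    by_cases h : i = j
    · subst h
      rw [Matrix.charmatrix_apply_eq, Matrix.diagonal_apply_eq, Matrix.diagonal_apply_eq]
    · rw [Matrix.charmatrix_apply_ne _ _ _ h, Matrix.diagonal_apply_ne _ h,
        Matrix.diagonal_apply_ne _ h]
      simp
  rw [Matrix.charpoly, hcm, Matrix.det_diagonal]

lemma multiset_eq_of_eig {g ev : Fin m → ℝ}
    (h : (∏ i, (X - C (g i))) = ∏ i, (X - C (ev i))) :
    Multiset.map ev Finset.univ.val = Multiset.map g Finset.univ.val := by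
  have h1 : ∀ w : Fin m → ℝ, (∏ i, (X - C (w i)))
      = (Multiset.map (fun a => X - C a) (Multiset.map w Finset.univ.val)).prod := by
    intro w
    rw [Multiset.map_map]
    rfl
  have h2 := congrArg Polynomial.roots h
  rw [h1 g, h1 ev, Polynomial.roots_multiset_prod_X_sub_C,
    Polynomial.roots_multiset_prod_X_sub_C] at h2
  exact h2.symm

/-- From an eigenvalue list of a "two-valued" diagonal matrix, recover the diagonal itself
as a permutation of the list. -/
lemma diag_mem_of_eig {d : ℕ} {Γ : Set (Fin d → ℝ)} (hC : CondC d Γ)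
    {g ev : Fin d → ℝ} {l0 : Fin d} {a bb : ℝ}
    (hg : g = fun i => if i = l0 then a else bb)
    (hmult : Multiset.map ev Finset.univ.val = Multiset.map g Finset.univ.val)
    (hev : ev ∈ Γ) : g ∈ Γ := by
  obtain ⟨-, -, -, -, hsym, -⟩ := hC
  have hmem : ∀ i : Fin d, ev i = a ∨ ev i = bb := by
    intro i
    have h1 : ev i ∈ Multiset.map ev Finset.univ.val :=
      Multiset.mem_map_of_mem ev (Finset.mem_val.mpr (Finset.mem_univ i))
    rw [hmult] at h1
    obtain ⟨j, -, hj⟩ := Multiset.mem_map.mp h1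
    rw [hg] at hj
    by_cases hjl : j = l0
    · left; rw [← hj]; simp [hjl]
    · right; rw [← hj]; simp [hjl]
  by_cases hab : a = bb
  · have hev_eq : ev = g := by
      funext i
      have hib : ev i = bb := by
        rcases hmem i with h | h
        · rw [h, hab]
        · exact h
      rw [hib, hg]
      by_cases hil : i = l0 <;> simp [hil, hab]
    rw [← hev_eq]; exact hev
  · -- count the occurrences of `a`
    have hgfilter : Finset.filter (fun i => a = g i) Finset.univ = ({l0} : Finset (Fin d)) := by
      ext i
      simp only [Finset.mem_filter, Finset.mem_univ, true_and, Finset.mem_singleton, hg]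
      constructor
      · intro hi
        by_contra hil
        rw [if_neg hil] at hi
        exact hab hi
      · intro hi; rw [if_pos hi]
    have hcount : Multiset.count a (Multiset.map ev Finset.univ.val) = 1 := by
      rw [hmult, Multiset.count_map]
      have : Multiset.filter (fun i => a = g i) Finset.univ.val
          = (Finset.filter (fun i => a = g i) Finset.univ).val := rfl
      rw [this, hgfilter]
      rfl
    rw [Multiset.count_map] at hcount
    have : Multiset.filter (fun i => a = ev i) Finset.univ.val
        = (Finset.filter (fun i => a = ev i) Finset.univ).val := rfl
    rw [this] at hcount
    have hcard : (Finset.filter (fun i => a = ev i) Finset.univ).card = 1 := hcount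
    obtain ⟨j, hj⟩ := Finset.card_eq_one.mp hcard
    have hja : ev j = a := by
      have : j ∈ Finset.filter (fun i => a = ev i) Finset.univ := by
        rw [hj]; exact Finset.mem_singleton_self j
      exact ((Finset.mem_filter.mp this).2).symm
    have hother : ∀ i : Fin d, i ≠ j → ev i = bb := by
      intro i hij
      rcases hmem i with h | h
      · exfalso
        have : i ∈ Finset.filter (fun i => a = ev i) Finset.univ := by
          simp [Finset.mem_filter, h.symm]
        rw [hj] at this
        exact hij (Finset.mem_singleton.mp this)
      · exact h
    have hgev : g = ev ∘ (Equiv.swap j l0) := by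
      funext i
      show g i = ev (Equiv.swap j l0 i)
      by_cases hil : i = l0
      · subst hil
        rw [Equiv.swap_apply_right, hja, hg]; simp
      · simp only [hg]
        rw [if_neg hil]
        by_cases hijj : i = j
        · subst hijj
          rw [Equiv.swap_apply_left]
          exact (hother l0 (fun hc => hil hc.symm)).symm
        · rw [Equiv.swap_apply_of_ne_of_ne hijj hil]
          exact (hother i hijj).symm
    rw [hgev]
    exact hsym _ ev hev

end Eig


section Gamma
variable {n : ℕ} {Γ : Set (Fin (n+2) → ℝ)} (hC : CondC (n+2) Γ)
include hC

lemma exists_shift_mem {lam : Fin (n+2) → ℝ} (hlam : lam ∈ Γ) :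
    ∃ ε > (0:ℝ), (fun i => lam i - ε) ∈ Γ := by
  obtain ⟨-, -, hopen, -, -, -⟩ := hC
  have hcont : Continuous fun ε : ℝ => (fun i : Fin (n+2) => lam i - ε) := by
    apply continuous_pi
    intro i
    exact continuous_const.sub continuous_id
  have hnhds : (fun ε : ℝ => (fun i : Fin (n+2) => lam i - ε)) ⁻¹' Γ ∈ 𝓝 (0:ℝ) := by
    apply (hopen.preimage hcont).mem_nhds
    simpa using hlam
  obtain ⟨l, u, hlu, hsub⟩ := mem_nhds_iff_exists_Ioo_subset.mp hnhds
  refine ⟨u/2, by linarith [hlu.1, hlu.2], ?_⟩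
  exact hsub ⟨by linarith [hlu.1, hlu.2], by linarith [hlu.2]⟩

lemma add_nonneg_mem {lam μ : Fin (n+2) → ℝ} (hlam : lam ∈ Γ) (hμ : ∀ i, 0 ≤ μ i) :
    lam + μ ∈ Γ := by
  obtain ⟨ε, hε, hmem⟩ := exists_shift_mem hC hlam
  obtain ⟨-, -, -, -, -, hadd⟩ := hC
  have := hadd _ hmem (fun i => μ i + ε)
    (fun i => by show 0 < μ i + ε; have := hμ i; linarith)
  convert this using 1
  funext i
  show lam i + μ i = (lam i - ε) + (μ i + ε)
  ring

lemma closure_add_nonneg_mem {lam μ : Fin (n+2) → ℝ} (hlam : lam ∈ closure Γ)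
    (hμ : ∀ i, 0 ≤ μ i) : lam + μ ∈ closure Γ := by
  have hmaps : Set.MapsTo (fun w : Fin (n+2) → ℝ => w + μ) Γ Γ :=
    fun w hw => add_nonneg_mem hC hw hμ
  exact hmaps.closure (continuous_id.add continuous_const) hlam

lemma muSet_gt_one (hstar : lamStar (n+2) ∉ closure Γ) {c : ℝ} (hc : c ∈ muSet (n+2) Γ) :
    1 < c := by
  by_contra hle
  push_neg at hle
  apply hstar
  have := closure_add_nonneg_mem hC hc
    (μ := fun i => if (i : ℕ) = 0 then 1 - c else 0)
    (fun i => by by_cases h : (i:ℕ) = 0 <;> simp [h] <;> linarith)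
  convert this using 1
  funext i
  show lamStar (n+2) i = _
  by_cases h : i = 0 <;> simp [lamStar, h]

lemma no_all_neg {lam : Fin (n+2) → ℝ} (hlam : lam ∈ Γ) (hneg : ∀ i, lam i < 0) :
    False := by
  obtain ⟨-, hne, -, hcone, -, hadd⟩ := hC
  obtain ⟨z, hz⟩ := Set.ne_univ_iff_exists_notMem _ |>.mp hne
  apply hz
  set T : ℝ := Finset.univ.sup' (by exact Finset.univ_nonempty) (fun i => z i / lam i) with hT
  set t : ℝ := max 1 (T + 1) with ht
  have ht0 : 0 < t := lt_of_lt_of_le one_pos (le_max_left _ _)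
  have hvals : ∀ i, t * lam i < z i := by
    intro i
    have h1 : z i / lam i ≤ T :=
      Finset.le_sup' (fun j => z j / lam j) (Finset.mem_univ i)
    have hTt : T + 1 ≤ t := le_max_right _ _
    have h2 : z i / lam i < t := by linarith
    exact (div_lt_iff_of_neg (hneg i)).mp h2
  have hmem : t • lam ∈ Γ := hcone t ht0 lam hlam
  have := hadd _ hmem (fun i => z i - t * lam i)
    (fun i => by show 0 < z i - t * lam i; have := hvals i; linarith)
  convert this using 1
  funext i
  show z i = t * lam i + (z i - t * lam i)
  ring

end Gamma


section Signs
variable {n : ℕ} {Γ : Set (Fin (n+2) → ℝ)} {v : E (n+2) → ℝ} {x : E (n+2)}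
  (hC : CondC (n+2) Γ)

lemma zero_ne_last : (0 : Fin (n+2)) ≠ lastIdx n := by
  simp only [lastIdx, Fin.ne_iff_vne, Fin.val_zero, Fin.val_last]
  omega

include hC

lemma dvec_last_pos (hd : dvec n v x ∈ Γ) : 0 < dvec n v x (lastIdx n) := by
  by_contra hle
  push_neg at hle
  obtain ⟨ε, hε, hmem⟩ := exists_shift_mem hC hd
  apply no_all_neg hC hmem
  intro i
  show dvec n v x i - ε < 0
  by_cases hi : i = lastIdx n
  · rw [hi]; linarith
  · rw [dvec, if_neg hi]
    have : (0:ℝ) ≤ Real.exp (-2 * v x) * (uu n v x)^2/2 := by positivity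
    linarith

lemma ratio_mem (hu : uu n v x ≠ 0) (hd : dvec n v x ∈ Γ) :
    dvec n v x (lastIdx n) / (Real.exp (-2 * v x) * (uu n v x)^2/2) ∈ muSet (n+2) Γ := by
  set b : ℝ := Real.exp (-2 * v x) * (uu n v x)^2/2 with hbdef
  have hb : 0 < b := by positivity
  obtain ⟨-, -, -, hcone, hsym, -⟩ := hC
  have h1 : (dvec n v x) ∘ (Equiv.swap (0 : Fin (n+2)) (lastIdx n)) ∈ Γ :=
    hsym _ _ hd
  have h2 : (1/b) • ((dvec n v x) ∘ (Equiv.swap (0 : Fin (n+2)) (lastIdx n))) ∈ Γ :=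
    hcone _ (by positivity) _ h1
  have h3 : (1/b) • ((dvec n v x) ∘ (Equiv.swap (0 : Fin (n+2)) (lastIdx n)))
      = fun i : Fin (n+2) =>
        if (i : ℕ) = 0 then dvec n v x (lastIdx n) / b else -1 := by
    funext i
    show (1/b) * dvec n v x (Equiv.swap (0 : Fin (n+2)) (lastIdx n) i) = _
    by_cases hi : (i : ℕ) = 0
    · have hi0 : i = 0 := by
        apply Fin.ext
        simpa using hi
      rw [if_pos hi, hi0, Equiv.swap_apply_left]
      field_simp
    · rw [if_neg hi]
      have hine : i ≠ 0 := fun hc => hi (by rw [hc]; rfl)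
      have hval : dvec n v x (Equiv.swap (0 : Fin (n+2)) (lastIdx n) i) = -b := by
        by_cases hil : i = lastIdx n
        · rw [hil, Equiv.swap_apply_right, dvec, if_neg zero_ne_last]
        · rw [Equiv.swap_apply_of_ne_of_ne hine hil, dvec, if_neg hil]
      rw [hval]
      field_simp
  rw [h3] at h2
  exact subset_closure h2

lemma PP_neg (hstar : lamStar (n+2) ∉ closure Γ) (hd : dvec n v x ∈ Γ) :
    PP n v x < 0 := by
  have hapos := dvec_last_pos hC hd
  have halast : dvec n v x (lastIdx n)
      = Real.exp (-2 * v x) * (-(PP n v x) + (uu n v x)^2/2) := by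
    rw [dvec, if_pos rfl]
  have hexp : (0:ℝ) < Real.exp (-2 * v x) := Real.exp_pos _
  by_cases hu : uu n v x = 0
  · rw [halast, hu] at hapos
    nlinarith
  · have hb : (0:ℝ) < Real.exp (-2 * v x) * (uu n v x)^2/2 := by positivity
    have hratio := muSet_gt_one hC hstar (ratio_mem hC hu hd)
    rw [halast] at hratio
    have := (one_lt_div hb).mp hratio
    nlinarith

lemma eN_mem (hd : dvec n v x ∈ Γ) :
    (fun i : Fin (n+2) => if i = lastIdx n then (1:ℝ) else 0) ∈ Γ := by
  obtain ⟨ε, hε, hmem⟩ := exists_shift_mem hC hd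
  set a : ℝ := dvec n v x (lastIdx n) - ε with hadef
  set t : ℝ := 1/(1 + |a|) with htdef
  have habs : (0:ℝ) < 1 + |a| := by positivity
  have ht : 0 < t := by positivity
  have hta : t * a < 1 := by
    have h1 : t * a ≤ t * |a| := by
      apply mul_le_mul_of_nonneg_left (le_abs_self a) (le_of_lt ht)
    have h2 : t * |a| < 1 := by
      rw [htdef, div_mul_eq_mul_div, one_mul, div_lt_one habs]
      linarith [abs_nonneg a]
    linarith
  obtain ⟨-, -, -, hcone, -, hadd⟩ := hC
  have hscaled : t • (fun i : Fin (n+2) => dvec n v x i - ε) ∈ Γ := hcone _ ht _ hmem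
  have := hadd _ hscaled
    (fun i : Fin (n+2) => (if i = lastIdx n then (1:ℝ) else 0) - t * (dvec n v x i - ε))
    (fun i => by
      show (0:ℝ) < (if i = lastIdx n then (1:ℝ) else 0) - t * (dvec n v x i - ε)
      by_cases hi : i = lastIdx n
      · rw [if_pos hi, hi, show dvec n v x (lastIdx n) - ε = a from hadef.symm]
        linarith [hta]
      · rw [if_neg hi, dvec, if_neg hi]
        have h0 : (0:ℝ) ≤ Real.exp (-2 * v x) * (uu n v x)^2/2 := by positivity
        have : -(Real.exp (-2 * v x) * (uu n v x)^2/2) - ε < 0 := by linarith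
        nlinarith)
  convert this using 1
  funext i
  show (if i = lastIdx n then (1:ℝ) else 0) = _
  show _ = t * (dvec n v x i - ε) +
      ((if i = lastIdx n then (1:ℝ) else 0) - t * (dvec n v x i - ε))
  ring

end Signs


section OneD
variable {n : ℕ} {v : E (n+2) → ℝ}

/-- the last basis vector -/
def ee (n : ℕ) : E (n+2) := EuclideanSpace.single (lastIdx n) (1:ℝ)
/-- the vertical ray -/
def gam (n : ℕ) : ℝ → E (n+2) := fun t => t • ee n
/-- `v` restricted to the vertical ray, differentiated -/
def UU (n : ℕ) (v : E (n+2) → ℝ) : ℝ → ℝ := fun t => uu n v (gam n t)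

lemma gam_coord (t : ℝ) : (gam n t) (lastIdx n) = t := by
  show (t • EuclideanSpace.single (lastIdx n) (1:ℝ)) (lastIdx n) = t
  simp [EuclideanSpace.single_apply]

lemma gam_mem {t : ℝ} (ht : 0 ≤ t) : gam n t ∈ SS n := by
  show (0:ℝ) ≤ (gam n t) (lastIdx n)
  rw [gam_coord]; exact ht

lemma gam_mapsTo : Set.MapsTo (gam n) (Set.Ici 0) (SS n) := fun t ht => gam_mem ht

lemma gam_hasDeriv (t : ℝ) : HasDerivWithinAt (gam n) (ee n) (Set.Ici 0) t := by
  have := (hasDerivWithinAt_id t (Set.Ici (0:ℝ))).smul_const (ee n)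
  simp at this; exact this

lemma gam_continuous : Continuous (gam n) := (continuous_id.smul continuous_const : _)

variable (hv : ContDiffOn ℝ 2 v (SS n)) (hdep : ∀ x ∈ SS n, v x = v (LL n x))
include hv hdep

lemma UU_hasDerivWithin {t : ℝ} (ht : t ∈ Set.Ici (0:ℝ)) :
    HasDerivWithinAt (UU n v) (PP n v (gam n t)) (Set.Ici 0) t := by
  have h1 : HasFDerivWithinAt (fun y => pd (n+2) (SS n) v (lastIdx n) y)
      (fderivWithin ℝ (fun y => pd (n+2) (SS n) v (lastIdx n) y) (SS n) (gam n t))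
      (SS n) (gam n t) :=
    ((hh_diffOn hv) (gam n t) (gam_mem ht)).hasFDerivWithinAt
  have h2 := h1.comp_hasDerivWithinAt t (gam_hasDeriv t) gam_mapsTo
  exact h2

lemma UU_hasDerivAt {t : ℝ} (ht : 0 < t) :
    HasDerivAt (UU n v) (PP n v (gam n t)) t :=
  (UU_hasDerivWithin hv hdep (le_of_lt ht)).hasDerivAt (Ici_mem_nhds ht)

lemma UU_contOn : ContinuousOn (UU n v) (Set.Ici 0) := by
  have h1 : ContinuousOn (fun y => pd (n+2) (SS n) v (lastIdx n) y) (SS n) :=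
    (hh_contDiffOn hv).continuousOn
  exact h1.comp gam_continuous.continuousOn gam_mapsTo

end OneD


lemma dvec_eq (n : ℕ) (v : E (n+2) → ℝ) (x : E (n+2)) :
    dvec n v x = fun i => if i = lastIdx n
      then Real.exp (-2 * v x) * (-(PP n v x) + (uu n v x)^2/2)
      else -(Real.exp (-2 * v x) * (uu n v x)^2/2) := rfl

lemma dvec_last (n : ℕ) (v : E (n+2) → ℝ) (x : E (n+2)) :
    dvec n v x (lastIdx n)
      = Real.exp (-2 * v x) * (-(PP n v x) + (uu n v x)^2/2) := by
  rw [dvec_eq]; simp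

end Aux16

open Aux16 in
theorem stmt16' (n : ℕ) (c p : ℝ) (hp : 0 ≤ p)
    (Γ : Set (Fin (n + 2) → ℝ)) (f : (Fin (n + 2) → ℝ) → ℝ)
    (hC : CondC (n + 2) Γ)
    (hstar : lamStar (n + 2) ∉ closure Γ)
    (h : (fun i : Fin (n + 2) => if i = lastIdx n then (1 : ℝ) else 0) ∈ frontier Γ ∨ c ≤ 0)
    (v : E (n + 2) → ℝ) (hv : ContDiffOn ℝ 2 v (closure (upperH n)))
    (hdep : ∀ x ∈ closure (upperH n),
      v x = v (EuclideanSpace.single (lastIdx n) (x (lastIdx n))))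
    (heq : ∀ x ∈ closure (upperH n), ∃ ev : Fin (n + 2) → ℝ,
      IsEigList (n + 2) (mHess (n + 2) (closure (upperH n)) v x) ev ∧ ev ∈ Γ ∧
        f ev = Real.exp (-p * v x))
    (hbd : ∀ x ∈ closure (upperH n), x (lastIdx n) = 0 →
      pd (n + 2) (closure (upperH n)) v (lastIdx n) x = c * Real.exp (v x)) :
    False := by
  rw [closure_upperH_eq] at hv hdep heq hbd
  have hdep' : ∀ x ∈ SS n, v x = v (LL n x) := by
    intro x hx
    rw [hdep x hx, LL_single_eq]
  -- the diagonal of the Möbius Hessian lies in Γ at every point of the halfspace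
  have hdvec : ∀ x ∈ SS n, dvec n v x ∈ Γ := by
    intro x hx
    obtain ⟨ev, hev, hevΓ, -⟩ := heq x hx
    have hev2 : (Matrix.diagonal (dvec n v x)).charpoly = ∏ i, (X - C (ev i)) := by
      rw [← mHess_diag hv hdep' hx]; exact hev
    rw [charpoly_diagonal] at hev2
    exact diag_mem_of_eig hC (dvec_eq n v x) (multiset_eq_of_eig hev2) hevΓ
  have h0mem : (0 : E (n+2)) ∈ SS n := by
    show (0:ℝ) ≤ (0 : E (n+2)) (lastIdx n)
    simp
  rcases h with hfront | hc
  · -- case eₙ ∈ ∂Γ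
    have hmem := eN_mem hC (hdvec 0 h0mem)
    obtain ⟨-, -, hopen, -, -, -⟩ := hC
    rw [hopen.frontier_eq] at hfront
    exact hfront.2 hmem
  · -- case c ≤ 0
    have hPneg : ∀ x ∈ SS n, PP n v x < 0 := fun x hx => PP_neg hC hstar (hdvec x hx)
    have hU0 : UU n v 0 = c * Real.exp (v 0) := by
      have hg0 : gam n 0 = (0 : E (n+2)) := by rw [gam]; simp
      have h0c : (0 : E (n+2)) (lastIdx n) = 0 := rfl
      have := hbd 0 h0mem h0c
      show uu n v (gam n 0) = _
      rw [hg0]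
      exact this
    have hU0le : UU n v 0 ≤ 0 := by
      rw [hU0]
      exact mul_nonpos_of_nonpos_of_nonneg hc (Real.exp_pos _).le
    have hanti : StrictAntiOn (UU n v) (Set.Ici 0) := by
      apply strictAntiOn_of_deriv_neg (convex_Ici 0) (UU_contOn hv hdep')
      intro t ht
      rw [interior_Ici] at ht
      rw [(UU_hasDerivAt hv hdep' ht).deriv]
      exact hPneg _ (gam_mem (le_of_lt ht))
    have hU1 : UU n v 1 < 0 :=
      lt_of_lt_of_le (hanti (Set.self_mem_Ici) (Set.mem_Ici.mpr zero_le_one) zero_lt_one) hU0le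
    have hUneg : ∀ t, 1 ≤ t → UU n v t < 0 := by
      intro t ht
      rcases eq_or_lt_of_le ht with rfl | hlt
      · exact hU1
      · exact lt_trans (hanti (Set.mem_Ici.mpr zero_le_one)
          (Set.mem_Ici.mpr (by linarith)) hlt) hU1
    -- the threshold m
    have hmu1 : uu n v (gam n 1) ≠ 0 := ne_of_lt hU1
    have hmuNe : (muSet (n+2) Γ).Nonempty :=
      ⟨_, ratio_mem hC hmu1 (hdvec _ (gam_mem zero_le_one))⟩
    have hbdd : BddBelow (muSet (n+2) Γ) :=
      ⟨1, fun c' hc' => (muSet_gt_one hC hstar hc').le⟩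
    have hclosed : IsClosed (muSet (n+2) Γ) := by
      have hcont : Continuous (fun c' : ℝ => (fun i : Fin (n+2) =>
          if (i:ℕ) = 0 then c' else -1)) := by
        apply continuous_pi
        intro i
        by_cases hi : (i:ℕ) = 0
        · simpa [hi] using continuous_id'
        · simpa [hi] using continuous_const
      exact isClosed_closure.preimage hcont
    set m : ℝ := sInf (muSet (n+2) Γ) with hmdef
    have hm : m ∈ muSet (n+2) Γ := hclosed.csInf_mem hmuNe hbdd
    have hm1 : 1 < m := muSet_gt_one hC hstar hm
    -- quantitative Riccati inequality for t ≥ 1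
    have hquant : ∀ t, 1 ≤ t → PP n v (gam n t) ≤ -((m-1) * (UU n v t)^2 / 2) := by
      intro t ht
      have htmem : gam n t ∈ SS n := gam_mem (by linarith)
      have hUt : UU n v t < 0 := hUneg t ht
      have hut : uu n v (gam n t) ≠ 0 := ne_of_lt hUt
      have hratio := ratio_mem hC hut (hdvec _ htmem)
      have hle : m ≤ dvec n v (gam n t) (lastIdx n) /
          (Real.exp (-2 * v (gam n t)) * (uu n v (gam n t))^2/2) := csInf_le hbdd hratio
      have hb : (0:ℝ) < Real.exp (-2 * v (gam n t)) * (uu n v (gam n t))^2/2 := by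
        positivity
      rw [dvec_last, le_div_iff₀ hb] at hle
      have hexp : (0:ℝ) < Real.exp (-2 * v (gam n t)) := Real.exp_pos _
      show PP n v (gam n t) ≤ -((m-1) * (uu n v (gam n t))^2 / 2)
      nlinarith
    -- blow-up of 1/U
    set φ : ℝ → ℝ := fun t => (UU n v t)⁻¹ with hφdef
    have hφ1 : φ 1 < 0 := inv_lt_zero.mpr hU1
    set T : ℝ := 1 + (2/(m-1)) * (1 - φ 1) with hTdef
    have h1T : (1:ℝ) < T := by
      have h2 : (0:ℝ) < 2/(m-1) := div_pos two_pos (by linarith)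
      have h3 : (0:ℝ) < (2/(m-1)) * (1 - φ 1) := mul_pos h2 (by linarith)
      rw [hTdef]
      linarith
    have hcontφ : ContinuousOn φ (Set.Icc 1 T) := by
      apply ContinuousOn.inv₀
      · exact (UU_contOn hv hdep').mono (fun t ht => Set.mem_Ici.mpr (by linarith [ht.1]))
      · intro t ht
        exact ne_of_lt (hUneg t ht.1)
    have hderφ : ∀ t ∈ Set.Ioo (1:ℝ) T,
        HasDerivAt φ (-(PP n v (gam n t)) / (UU n v t)^2) t := by
      intro t ht
      exact (UU_hasDerivAt hv hdep' (by linarith [ht.1])).inv (ne_of_lt (hUneg t ht.1.le))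
    obtain ⟨s, hs, hslope⟩ := exists_hasDerivAt_eq_slope φ
      (fun t => -(PP n v (gam n t)) / (UU n v t)^2) h1T hcontφ hderφ
    have hUs : UU n v s < 0 := hUneg s hs.1.le
    have hUs2 : (0:ℝ) < (UU n v s)^2 := by
      rw [sq]; exact mul_pos_of_neg_of_neg hUs hUs
    have hq := hquant s hs.1.le
    have hslope_ge : (m-1)/2 ≤ (φ T - φ 1) / (T - 1) := by
      rw [← hslope, le_div_iff₀ hUs2]
      linarith [hq]
    have hT1 : (0:ℝ) < T - 1 := by linarith
    rw [le_div_iff₀ hT1] at hslope_ge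
    have hφT : 1 ≤ φ T := by
      have : (m-1)/2 * (T-1) = 1 - φ 1 := by
        have hmne : m - 1 ≠ 0 := by linarith
        rw [hTdef]
        field_simp
        ring
      linarith
    have hφTneg : φ T < 0 := inv_lt_zero.mpr (hUneg T h1T.le)
    linarith


/-- Remark 4.3 of the paper: nonexistence of one-variable solutions when either
`eₙ ∈ ∂Γ` or `c ≤ 0`. -/
theorem stmt16 (n : ℕ) (c p : ℝ) (hp : 0 ≤ p)
    (Γ : Set (Fin (n + 2) → ℝ)) (f : (Fin (n + 2) → ℝ) → ℝ)
    (hC : CondC (n + 2) Γ) (hF : CondF (n + 2) Γ f)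
    (hstar : lamStar (n + 2) ∉ closure Γ)
    (h : (fun i : Fin (n + 2) => if i = lastIdx n then (1 : ℝ) else 0) ∈ frontier Γ ∨ c ≤ 0)
    (v : E (n + 2) → ℝ) (hv : ContDiffOn ℝ 2 v (closure (upperH n)))
    (hdep : ∀ x ∈ closure (upperH n),
      v x = v (EuclideanSpace.single (lastIdx n) (x (lastIdx n))))
    (heq : ∀ x ∈ closure (upperH n), ∃ ev : Fin (n + 2) → ℝ,
      IsEigList (n + 2) (mHess (n + 2) (closure (upperH n)) v x) ev ∧ ev ∈ Γ ∧
        f ev = Real.exp (-p * v x))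
    (hbd : ∀ x ∈ closure (upperH n), x (lastIdx n) = 0 →
      pd (n + 2) (closure (upperH n)) v (lastIdx n) x = c * Real.exp (v x)) :
    False := by
  exact stmt16' n c p hp Γ f hC hstar h v hv hdep heq hbd
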